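/- Let D be an n-vertex simple directed graph with no cyclically directed triangle. Fix a vertex u₁, set I₁ = N⁻_D(u₁) (in-neighborhood) and O₁* = N⁺_D(u₁) ∖ I₁. Suppose u₀ ∈ O₁* satisfies d⁺_D(u₀, O₁*) ≤ |O₁*|/2. Then d⁺_D(u₀) ≤ n − |O₁*|/2 − d⁻_D(u₁). Consequently, if additionally d⁻_D(u₁) ≥ δ⁺(D) and d⁺_D(u₀) ≥ δ⁺(D), then |N⁺_D(u₁) ∖ N⁻_D(u₁)| = |O₁*| ≤ 2n − 4δ⁺(D). -/
import Mathlib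


open Finset

/-- In a simple digraph with no cyclically directed triangle:
with `I₁ = N⁻(u₁)`, `O₁* = N⁺(u₁) ∖ I₁`, and `u₀ ∈ O₁*` satisfying
`d⁺(u₀, O₁*) ≤ |O₁*|/2`, one has `d⁺(u₀) ≤ n − |O₁*|/2 − d⁻(u₁)`; consequently,
if `d⁻(u₁) ≥ δ` and `d⁺(u₀) ≥ δ` then `|O₁*| ≤ 2n − 4δ`. -/
theorem stmt_11 {V : Type*} [Fintype V] [DecidableEq V]
    (D : V → V → Prop) [DecidableRel D] (hirr : ∀ v, ¬ D v v)
    (htri : ¬ ∃ x y z : V, D x y ∧ D y z ∧ D z x)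
    (n : ℕ) (hn : Fintype.card V = n) (u₁ u₀ : V)
    (I₁ O₁ : Finset V)
    (hI : I₁ = Finset.univ.filter (fun w => D w u₁))
    (hO : O₁ = (Finset.univ.filter (fun w => D u₁ w)) \ I₁)
    (hu₀ : u₀ ∈ O₁)
    (hdeg : ((O₁.filter (fun w => D u₀ w)).card : ℝ) ≤ (O₁.card : ℝ) / 2) :
    ((Finset.univ.filter (fun w => D u₀ w)).card : ℝ)
        ≤ (n : ℝ) - (O₁.card : ℝ) / 2
          - ((Finset.univ.filter (fun w => D w u₁)).card : ℝ) ∧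
    ∀ δ : ℝ, δ ≤ ((Finset.univ.filter (fun w => D w u₁)).card : ℝ) →
      δ ≤ ((Finset.univ.filter (fun w => D u₀ w)).card : ℝ) →
      (O₁.card : ℝ) ≤ 2 * (n : ℝ) - 4 * δ := by
  classical
  subst hI
  set A := Finset.univ.filter (fun w => D u₀ w) with hA
  set I := Finset.univ.filter (fun w => D w u₁) with hIdef
  set B := O₁.filter (fun w => ¬ D u₀ w) with hB
  have hDu : D u₁ u₀ := by
    rw [hO] at hu₀
    simp only [Finset.mem_sdiff, Finset.mem_filter, Finset.mem_univ, true_and] at hu₀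
    exact hu₀.1
  have hAI : Disjoint A I := by
    rw [Finset.disjoint_left]
    intro w hwA hwI
    simp only [hA, hIdef, Finset.mem_filter, Finset.mem_univ, true_and] at hwA hwI
    exact htri ⟨u₀, w, u₁, hwA, hwI, hDu⟩
  have hAB : Disjoint A B := by
    rw [Finset.disjoint_left]
    intro w hwA hwB
    simp only [hA, hB, Finset.mem_filter, Finset.mem_univ, true_and] at hwA hwB
    exact hwB.2 hwA
  have hIB : Disjoint I B := by
    rw [Finset.disjoint_left]
    intro w hwI hwB
    have hwO : w ∈ O₁ := (Finset.mem_filter.mp hwB).1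
    rw [hO] at hwO
    exact (Finset.mem_sdiff.mp hwO).2 hwI
  have hcard : A.card + I.card + B.card ≤ n := by
    have h1 : ((A ∪ I) ∪ B).card = A.card + I.card + B.card := by
      rw [Finset.card_union_of_disjoint (Finset.disjoint_union_left.mpr ⟨hAB, hIB⟩),
        Finset.card_union_of_disjoint hAI]
    calc A.card + I.card + B.card = ((A ∪ I) ∪ B).card := h1.symm
      _ ≤ Fintype.card V := Finset.card_le_univ _
      _ = n := hn
  have hsplit : (O₁.filter (fun w => D u₀ w)).card + B.card = O₁.card := by
    rw [hB]; exact Finset.card_filter_add_card_filter_not _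
  have hmain : ((A.card : ℝ)) ≤ (n : ℝ) - (O₁.card : ℝ) / 2 - (I.card : ℝ) := by
    have h2 : (A.card : ℝ) + (I.card : ℝ) + (B.card : ℝ) ≤ (n : ℝ) := by
      exact_mod_cast hcard
    have h3 : ((O₁.filter (fun w => D u₀ w)).card : ℝ) + (B.card : ℝ) = (O₁.card : ℝ) := by
      exact_mod_cast hsplit
    linarith
  refine ⟨hmain, fun δ h1 h2 => ?_⟩
  linarith
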